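/- Let m be a closed and coherent integer DBM of dimension 2n, and define the DBM m' by m'[i,j] = min( m[i,j], ⌊m[i,ī]/2⌋ + ⌊m[j̄,j]/2⌋ ) for all i,j. Then m' is either closed or it is not consistent. -/

import Mathlib

namespace Octagon

/-- An integer DBM of dimension `2*n` with entries in `ℤ ∪ {+∞}`. -/
abbrev DBM (n : ℕ) : Type := Fin (2 * n) → Fin (2 * n) → WithTop ℤ

/-- `bar i = i + 1` if `i` is even, `i - 1` if `i` is odd. -/
def bar {n : ℕ} (i : Fin (2 * n)) : Fin (2 * n) :=
  if h : (i : ℕ) % 2 = 0 then ⟨(i : ℕ) + 1, by have := i.isLt; omega⟩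
  else ⟨(i : ℕ) - 1, by have := i.isLt; omega⟩

/-- A DBM is closed iff its diagonal is zero and it satisfies the triangle inequality. -/
def Closed {n : ℕ} (m : DBM n) : Prop :=
  (∀ i, m i i = 0) ∧ ∀ i j k, m i j ≤ m i k + m k j

/-- A DBM is consistent iff its diagonal entries are nonnegative. -/
def Consistent {n : ℕ} (m : DBM n) : Prop :=
  ∀ i, 0 ≤ m i i

/-- A DBM is coherent iff `m[i,j] = m[bar j, bar i]` for all `i, j`. -/
def Coherent {n : ℕ} (m : DBM n) : Prop :=
  ∀ i j, m i j = m (bar j) (bar i)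

/-- Incremental closure of `m` with the new constraint `x'_a - x'_b ≤ d`. -/
def IncClose {n : ℕ} (m : DBM n) (a b : Fin (2 * n)) (d : ℤ) : DBM n :=
  fun i j =>
    min (m i j) <|
    min (m i a + (d : WithTop ℤ) + m b j) <|
    min (m i (bar b) + (d : WithTop ℤ) + m (bar a) j) <|
    min (m i (bar b) + (d : WithTop ℤ) + m (bar a) a + (d : WithTop ℤ) + m b j)
        (m i a + (d : WithTop ℤ) + m b (bar b) + (d : WithTop ℤ) + m (bar a) j)

/-- Floor halving `⌊x/2⌋` on `ℤ ∪ {+∞}`, mapping `+∞` to `+∞`. -/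
def fhalve : WithTop ℤ → WithTop ℤ := WithTop.map (fun x => Int.fdiv x 2)

/-- The entrywise tightening operation `x ↦ 2·⌊x/2⌋`, mapping `+∞` to `+∞`. -/
def tightEntry : WithTop ℤ → WithTop ℤ := WithTop.map (fun x => 2 * Int.fdiv x 2)

/-- Tightening of an integer DBM: key entries `m[i, bar i]` are replaced by
`2·⌊m[i, bar i]/2⌋`, all other entries are unchanged. -/
def Tighten {n : ℕ} (m : DBM n) : DBM n :=
  fun i j => if j = bar i then tightEntry (m i j) else m i j

/-- Integer strengthening of a DBM. -/
def Strengthen {n : ℕ} (m : DBM n) : DBM n :=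
  fun i j => min (m i j) (fhalve (m i (bar i)) + fhalve (m (bar j) j))

/-- An extended integer is even iff it is `+∞` or a finite even integer. -/
def EvenTop (x : WithTop ℤ) : Prop :=
  x = ⊤ ∨ ∃ k : ℤ, x = ((2 * k : ℤ) : WithTop ℤ)

lemma bar_val {n : ℕ} (i : Fin (2 * n)) :
    (bar i : ℕ) = if (i : ℕ) % 2 = 0 then (i : ℕ) + 1 else (i : ℕ) - 1 := by
  unfold bar; split <;> simp_all

lemma bar_bar {n : ℕ} (i : Fin (2 * n)) : bar (bar i) = i := by
  have := i.isLt
  apply Fin.ext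
  rw [bar_val, bar_val]
  split_ifs <;> omega

lemma fhalve_le_add (x y z : WithTop ℤ) (h : x ≤ y + y + z) :
    fhalve x ≤ y + fhalve z := by
  cases y with
  | top => simp
  | coe a =>
    cases z with
    | top => simp [fhalve]
    | coe c =>
      cases x with
      | top =>
        exfalso
        rw [top_le_iff] at h
        simp [← WithTop.coe_add] at h
      | coe b =>
        simp only [fhalve, WithTop.map_coe, ← WithTop.coe_add, WithTop.coe_le_coe] at h ⊢
        rw [Int.fdiv_eq_ediv_of_nonneg _ (by norm_num), Int.fdiv_eq_ediv_of_nonneg _ (by norm_num)]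
        omega

/-- Lemma: tightening-and-strengthening a closed coherent integer DBM in one
step yields a DBM that is closed or inconsistent. -/
theorem tighten_strengthen_closed_or_not_consistent {n : ℕ} (m : DBM n)
    (hcl : Closed m) (hcoh : Coherent m) (m' : DBM n)
    (hm' : ∀ i j, m' i j = min (m i j) (fhalve (m i (bar i)) + fhalve (m (bar j) j))) :
    Closed m' ∨ ¬ Consistent m' := by
  obtain ⟨hdiag, htri⟩ := hcl
  -- key inequality A : fhalve (m i (bar i)) ≤ m i k + fhalve (m k (bar k))
  have keyA : ∀ i k : Fin (2 * n),
      fhalve (m i (bar i)) ≤ m i k + fhalve (m k (bar k)) := by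
    intro i k
    apply fhalve_le_add
    have h1 : m i (bar i) ≤ m i k + m k (bar i) := htri i (bar i) k
    have h2 : m k (bar i) ≤ m k (bar k) + m (bar k) (bar i) := htri k (bar i) (bar k)
    have h3 : m (bar k) (bar i) = m i k := (hcoh i k).symm
    calc m i (bar i) ≤ m i k + (m k (bar k) + m (bar k) (bar i)) :=
          le_trans h1 (add_le_add_right h2 _)
      _ = m i k + m i k + m k (bar k) := by rw [h3]; abel
  -- key inequality B : fhalve (m (bar j) j) ≤ fhalve (m (bar k) k) + m k j
  have keyB : ∀ j k : Fin (2 * n),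
      fhalve (m (bar j) j) ≤ fhalve (m (bar k) k) + m k j := by
    intro j k
    have h1 : m (bar j) j ≤ m (bar j) (bar k) + m (bar k) j := htri (bar j) j (bar k)
    have h2 : m (bar k) j ≤ m (bar k) k + m k j := htri (bar k) j k
    have h3 : m (bar j) (bar k) = m k j := by
      rw [hcoh (bar j) (bar k), bar_bar, bar_bar]
    rw [add_comm]
    apply fhalve_le_add
    calc m (bar j) j ≤ m (bar j) (bar k) + (m (bar k) k + m k j) :=
          le_trans h1 (add_le_add_right h2 _)
      _ = m k j + m k j + m (bar k) k := by rw [h3]; abel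
  by_cases hc : ∀ k : Fin (2 * n), 0 ≤ fhalve (m k (bar k)) + fhalve (m (bar k) k)
  · left
    constructor
    · intro i
      rw [hm' i i, hdiag i, min_eq_left (hc i)]
    · intro i j k
      rw [hm' i j, hm' i k, hm' k j]
      rcases min_cases (m i k) (fhalve (m i (bar i)) + fhalve (m (bar k) k)) with
        ⟨e1, _⟩ | ⟨e1, _⟩ <;>
      rcases min_cases (m k j) (fhalve (m k (bar k)) + fhalve (m (bar j) j)) with
        ⟨e2, _⟩ | ⟨e2, _⟩ <;> rw [e1, e2]
      · exact le_trans (min_le_left _ _) (htri i j k)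
      · -- m i k + (fhalve (m k (bar k)) + fhalve (m (bar j) j))
        refine le_trans (min_le_right _ _) ?_
        calc fhalve (m i (bar i)) + fhalve (m (bar j) j)
            ≤ (m i k + fhalve (m k (bar k))) + fhalve (m (bar j) j) :=
              add_le_add_left (keyA i k) _
          _ = m i k + (fhalve (m k (bar k)) + fhalve (m (bar j) j)) := by abel
      · -- (fhalve (m i (bar i)) + fhalve (m (bar k) k)) + m k j
        refine le_trans (min_le_right _ _) ?_
        calc fhalve (m i (bar i)) + fhalve (m (bar j) j)
            ≤ fhalve (m i (bar i)) + (fhalve (m (bar k) k) + m k j) :=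
              add_le_add_right (keyB j k) _
          _ = (fhalve (m i (bar i)) + fhalve (m (bar k) k)) + m k j := by abel
      · -- both halved terms
        refine le_trans (min_le_right _ _) ?_
        have hk : 0 ≤ fhalve (m (bar k) k) + fhalve (m k (bar k)) := by
          have := hc (bar k)
          rwa [bar_bar] at this
        calc fhalve (m i (bar i)) + fhalve (m (bar j) j)
            = fhalve (m i (bar i)) + 0 + fhalve (m (bar j) j) := by rw [add_zero]
          _ ≤ fhalve (m i (bar i)) + (fhalve (m (bar k) k) + fhalve (m k (bar k)))
                + fhalve (m (bar j) j) :=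
              add_le_add_left (add_le_add_right hk _) _
          _ = (fhalve (m i (bar i)) + fhalve (m (bar k) k))
                + (fhalve (m k (bar k)) + fhalve (m (bar j) j)) := by abel
  · right
    push_neg at hc
    obtain ⟨k, hk⟩ := hc
    intro hcons
    have h1 := hcons k
    rw [hm' k k] at h1
    have h2 : m' k k ≤ fhalve (m k (bar k)) + fhalve (m (bar k) k) := by
      rw [hm' k k]; exact min_le_right _ _
    rw [hm' k k] at h2
    exact absurd (le_trans h1 h2) (not_le.mpr hk)

end Octagon
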